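/- Let M be a Garside monoid with Garside element Δ, and let N be a parabolic submonoid of M. Then the relation ≤_N is a partial order on the enveloping group G(M); moreover, if g1 ≤_N g2 then g1 G(N) = g2 G(N), where G(N) is the subgroup of G(M) generated by N. -/
import Mathlib


namespace PG

variable {M : Type*} [Monoid M]

/-- `LDvd a b` : `a` left-divides `b`. -/
def LDvd (a b : M) : Prop := ∃ c, b = a * c

/-- `RDvd a b` : `a` right-divides `b`. -/
def RDvd (a b : M) : Prop := ∃ c, b = c * a

/-- A monoid is cancellative if `c * a * d = c * b * d` implies `a = b`. -/
def IsCancellative (M : Type*) [Monoid M] : Prop :=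
  ∀ a b c d : M, c * a * d = c * b * d → a = b

/-- A monoid is atomic if it admits a norm `ν : M → ℕ` with `ν a > 0` for `a ≠ 1`
and `ν (a * b) ≥ ν a + ν b`. -/
def IsAtomicMon (M : Type*) [Monoid M] : Prop :=
  ∃ ν : M → ℕ, (∀ a : M, a ≠ 1 → 0 < ν a) ∧ ∀ a b : M, ν a + ν b ≤ ν (a * b)

/-- `m` is the least common multiple of `a` and `b` for left-divisibility. -/
def IsLcmL (a b m : M) : Prop :=
  LDvd a m ∧ LDvd b m ∧ ∀ c : M, LDvd a c → LDvd b c → LDvd m c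

/-- `m` is the least common multiple of `a` and `b` for right-divisibility. -/
def IsLcmR (a b m : M) : Prop :=
  RDvd a m ∧ RDvd b m ∧ ∀ c : M, RDvd a c → RDvd b c → RDvd m c

/-- `d` is the greatest common left-divisor of `a` and `b`. -/
def IsGcdL (a b d : M) : Prop :=
  LDvd d a ∧ LDvd d b ∧ ∀ c : M, LDvd c a → LDvd c b → LDvd c d

/-- `d` is the greatest common right-divisor of `a` and `b`. -/
def IsGcdR (a b d : M) : Prop :=
  RDvd d a ∧ RDvd d b ∧ ∀ c : M, RDvd c a → RDvd c b → RDvd c d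

/-- A preGarside monoid: cancellative, atomic, and any two elements admitting a
common multiple (on the appropriate side) admit a least one. -/
def IsPreGarside (M : Type*) [Monoid M] : Prop :=
  IsCancellative M ∧ IsAtomicMon M ∧
    (∀ a b : M, (∃ c, LDvd a c ∧ LDvd b c) → ∃ m, IsLcmL a b m) ∧
    (∀ a b : M, (∃ c, RDvd a c ∧ RDvd b c) → ∃ m, IsLcmR a b m)

/-- A submonoid is special if it is closed under factors. -/
def IsSpecial (N : Submonoid M) : Prop := ∀ a b : M, a * b ∈ N → a ∈ N ∧ b ∈ N

/-- A (standard) parabolic submonoid: special and closed under all existing lcms. -/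
def IsParabolic (N : Submonoid M) : Prop :=
  IsSpecial N ∧ (∀ a b m : M, a ∈ N → b ∈ N → IsLcmL a b m → m ∈ N) ∧
    ∀ a b m : M, a ∈ N → b ∈ N → IsLcmR a b m → m ∈ N

/-- `b` is a factor of `a`. -/
def Factor (b a : M) : Prop := ∃ c d : M, a = c * b * d

/-- The set of factors of `a`. -/
def Factors (a : M) : Set M := {b | Factor b a}

/-- An element is balanced when its left-divisors and right-divisors coincide. -/
def IsBalanced (a : M) : Prop := {b : M | LDvd b a} = {b : M | RDvd b a}

/-- A Garside element: balanced, and its factors generate the monoid. -/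
def IsGarsideElt (Δ : M) : Prop := IsBalanced Δ ∧ Submonoid.closure (Factors Δ) = ⊤

/-- A Garside monoid: a preGarside monoid possessing a Garside element. -/
def IsGarside (M : Type*) [Monoid M] : Prop := IsPreGarside M ∧ ∃ Δ : M, IsGarsideElt Δ

/-- The factors of `a` computed inside the submonoid `N`. -/
def FactorsIn (N : Submonoid M) (a : M) : Set M :=
  {b | b ∈ N ∧ ∃ c ∈ N, ∃ d ∈ N, a = c * b * d}

/-- `Δ` is a Garside element of the submonoid `N`: it is balanced in `N` and its
factors in `N` generate `N`. -/
def IsGarsideEltIn (N : Submonoid M) (Δ : M) : Prop :=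
  Δ ∈ N ∧ ({b : M | b ∈ N ∧ ∃ c ∈ N, Δ = b * c} = {b : M | b ∈ N ∧ ∃ c ∈ N, Δ = c * b}) ∧
    Submonoid.closure (FactorsIn N Δ) = N

/-- The right coset `g * N` (an `R_N`-class). -/
def RCoset (N : Submonoid M) (g : M) : Set M := {x | ∃ h ∈ N, x = g * h}

/-- The left coset `N * g` (an `L_N`-class). -/
def LCoset (N : Submonoid M) (g : M) : Set M := {x | ∃ h ∈ N, x = h * g}

/-- `RReduces N B A` : the `R_N`-class `B` reduces in one step to the `R_N`-class `A`,
i.e. `A = g₁ N`, `B = g₂ N` with `g₂ ∈ g₁ N` and `g₁ ∉ g₂ N`. -/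
def RReduces (N : Submonoid M) (B A : Set M) : Prop :=
  ∃ g₁ g₂ : M, A = RCoset N g₁ ∧ B = RCoset N g₂ ∧ g₂ ∈ RCoset N g₁ ∧ g₁ ∉ RCoset N g₂

/-- `LReduces N B A` : the `L_N`-class `B` reduces in one step to the `L_N`-class `A`. -/
def LReduces (N : Submonoid M) (B A : Set M) : Prop :=
  ∃ g₁ g₂ : M, A = LCoset N g₁ ∧ B = LCoset N g₂ ∧ g₂ ∈ LCoset N g₁ ∧ g₁ ∉ LCoset N g₂

/-- `N` has the `R` confluence property: the reduction rule on `R_N`-classes is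
Noetherian and locally confluent. -/
def RConfluence (N : Submonoid M) : Prop :=
  (¬ ∃ f : ℕ → Set M, ∀ n : ℕ, RReduces N (f n) (f (n + 1))) ∧
    ∀ C A B : Set M, RReduces N C A → RReduces N C B →
      ∃ D : Set M, Relation.ReflTransGen (RReduces N) A D ∧
        Relation.ReflTransGen (RReduces N) B D

/-- `N` has the `L` confluence property. -/
def LConfluence (N : Submonoid M) : Prop :=
  (¬ ∃ f : ℕ → Set M, ∀ n : ℕ, LReduces N (f n) (f (n + 1))) ∧
    ∀ C A B : Set M, LReduces N C A → LReduces N C B →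
      ∃ D : Set M, Relation.ReflTransGen (LReduces N) A D ∧
        Relation.ReflTransGen (LReduces N) B D

/-- `N` has the confluence property. -/
def Confluence (N : Submonoid M) : Prop := RConfluence N ∧ LConfluence N

/-- The `R_N`-class `C` is minimal: whenever `g` represents `C` and `g = g' * h` with
`h ∈ N`, one has `g' N = C`. -/
def IsMinimalRCoset (N : Submonoid M) (C : Set M) : Prop :=
  (∃ g : M, C = RCoset N g) ∧
    ∀ g g' h : M, h ∈ N → C = RCoset N g → g = g' * h → RCoset N g' = C

/-- The `L_N`-class `C` is minimal. -/
def IsMinimalLCoset (N : Submonoid M) (C : Set M) : Prop :=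
  (∃ g : M, C = LCoset N g) ∧
    ∀ g g' h : M, h ∈ N → C = LCoset N g → g = h * g' → LCoset N g' = C

/-- The set of atoms of `M`. -/
def AtomSet (M : Type*) [Monoid M] : Set M :=
  {a | a ≠ 1 ∧ ∀ b c : M, a = b * c → b = 1 ∨ c = 1}

/-- `|x|` : the least number of factors of `Δ` needed to write `x` as a product. -/
noncomputable def lenFactors (Δ x : M) : ℕ :=
  sInf {k | ∃ l : List M, l.length = k ∧ (∀ y ∈ l, y ∈ Factors Δ) ∧ l.prod = x}

section Amalgam

variable {M₁ M₂ N : Type*} [Monoid M₁] [Monoid M₂] [Monoid N]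

/-- The congruence on the free product `M₁ ∗ M₂` identifying `ι₁ h` with `ι₂ h`
for every `h ∈ N`. -/
def amalgamCon (ι₁ : N →* M₁) (ι₂ : N →* M₂) : Con (Monoid.Coprod M₁ M₂) :=
  conGen fun a b => ∃ h : N, a = Monoid.Coprod.inl (ι₁ h) ∧ b = Monoid.Coprod.inr (ι₂ h)

/-- The amalgamated product `M₁ *_N M₂` : the pushout of `ι₁ : N →* M₁` and
`ι₂ : N →* M₂` in the category of monoids. -/
def Amalgam (ι₁ : N →* M₁) (ι₂ : N →* M₂) : Type _ := (amalgamCon ι₁ ι₂).Quotient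

instance (ι₁ : N →* M₁) (ι₂ : N →* M₂) : Monoid (Amalgam ι₁ ι₂) :=
  inferInstanceAs (Monoid (amalgamCon ι₁ ι₂).Quotient)

/-- The canonical morphism `M₁ →* M₁ *_N M₂`. -/
def amalgamInl (ι₁ : N →* M₁) (ι₂ : N →* M₂) : M₁ →* Amalgam ι₁ ι₂ :=
  (amalgamCon ι₁ ι₂).mk'.comp Monoid.Coprod.inl

/-- The canonical morphism `M₂ →* M₁ *_N M₂`. -/
def amalgamInr (ι₁ : N →* M₁) (ι₂ : N →* M₂) : M₂ →* Amalgam ι₁ ι₂ :=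
  (amalgamCon ι₁ ι₂).mk'.comp Monoid.Coprod.inr

end Amalgam

section Groups

/-- `G`, together with `κ : M →* G`, is the enveloping group `G(M)` of the monoid `M`:
every monoid morphism from `M` to a group factors uniquely through `κ`. -/
def IsEnvelopingGroup (M : Type) [Monoid M] (G : Type) [Group G] (κ : M →* G) : Prop :=
  ∀ (H : Type) [Group H], ∀ f : M →* H, ∃! φ : G →* H, φ.comp κ = f

variable {G : Type*} [Group G]

/-- `(a, b)` is the (right) normal form of `g ∈ G(M)` : `g = a b⁻¹` with `a ∧_R b = 1`. -/
def NormalForm (κ : M →* G) (g : G) (a b : M) : Prop :=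
  g = κ a * (κ b)⁻¹ ∧ ∀ c : M, RDvd c a → RDvd c b → c = 1

/-- The relation `≤_N` on `G(M)` : for `g₁ = a₁ b₁⁻¹` and `g₂ = a₂ b₂⁻¹` in normal form,
`g₁ ≤_N g₂` iff there are `h₁, h₂ ∈ N` and `a ∈ M` with `a₂ = a₁ a`,
`h₂ b₂ = h₁ b₁ a` and `h₂ ∧_L h₁ = h₂ ∧_L (h₁ b₁)`. -/
def leN (κ : M →* G) (N : Submonoid M) (g₁ g₂ : G) : Prop :=
  ∃ a₁ b₁ a₂ b₂ : M, NormalForm κ g₁ a₁ b₁ ∧ NormalForm κ g₂ a₂ b₂ ∧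
    ∃ h₁ ∈ N, ∃ h₂ ∈ N, ∃ a : M, a₂ = a₁ * a ∧ h₂ * b₂ = h₁ * b₁ * a ∧
      ∃ d : M, IsGcdL h₂ h₁ d ∧ IsGcdL h₂ (h₁ * b₁) d

/-- `|g|` for `g ∈ G(M)` : the least number of factors of `Δ` and inverses of such
needed to write `g` as a product. -/
noncomputable def lenSimple (κ : M →* G) (Δ : M) (g : G) : ℕ :=
  sInf {k | ∃ l : List G, l.length = k ∧
    (∀ x ∈ l, ∃ d ∈ Factors Δ, x = κ d ∨ x = (κ d)⁻¹) ∧ l.prod = g}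

/-- `PhiSpec κ Δ ΔN g h m` : `m = φ_g(h)`, where, for `g` with normal form `a b⁻¹`,
`φ_g(h) = a (a ∧_R (h b))⁻¹ (M_N(h b (a ∧_R (h b))⁻¹))⁻¹` and
`M_N(x) = (x ∧_L Δ_N^{|x|})⁻¹ x`. -/
def PhiSpec (κ : M →* G) (Δ ΔN : M) (g : G) (h : M) (m : G) : Prop :=
  ∃ a b c y d z : M,
    NormalForm κ g a b ∧ IsGcdR a (h * b) c ∧ h * b = y * c ∧
    IsGcdL y (ΔN ^ lenFactors Δ y) d ∧ y = d * z ∧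
    m = κ a * (κ c)⁻¹ * (κ z)⁻¹

/-- The restriction of `κ : M →* G` to a submonoid `N`, seen as a morphism onto the
subgroup of `G` generated by the image of `N`. -/
def restrictHom (κ : M →* G) (N : Submonoid M) :
    ↥N →* ↥(Subgroup.closure (κ '' (N : Set M))) :=
  MonoidHom.codRestrict (κ.comp N.subtype) (Subgroup.closure (κ '' (N : Set M)))
    fun x => Subgroup.subset_closure ⟨(x : M), x.2, rfl⟩

end Groups

/-- The family of preGarside monoids of FC type: the smallest family of monoids
containing the Garside monoids and closed under amalgamated products over a common
parabolic submonoid (and under isomorphism). -/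
inductive IsFCType : (M : Type) → [_inst : Monoid M] → Prop where
  | garside : ∀ (M : Type) [Monoid M], IsGarside M → IsFCType M
  | amalgam : ∀ (M₁ M₂ N : Type) [Monoid M₁] [Monoid M₂] [Monoid N]
      (ι₁ : N →* M₁) (ι₂ : N →* M₂),
      Function.Injective ι₁ → Function.Injective ι₂ →
      IsParabolic (MonoidHom.mrange ι₁) → IsParabolic (MonoidHom.mrange ι₂) →
      IsFCType M₁ → IsFCType M₂ → IsFCType (Amalgam ι₁ ι₂)
  | congr : ∀ (M : Type) [Monoid M] (M' : Type) [Monoid M'],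
      (M ≃* M') → IsFCType M → IsFCType M'

section Aux

variable {M : Type*} [Monoid M]

/-! ### Basic cancellation and atomicity -/

theorem cancel_left' (hc : IsCancellative M) {a b c : M} (h : a * b = a * c) : b = c :=
  hc b c a 1 (by simpa using h)

theorem cancel_right' (hc : IsCancellative M) {a b c : M} (h : a * c = b * c) : a = b :=
  hc a b 1 c (by simpa using h)

theorem mul_eq_one' (hA : IsAtomicMon M) {a b : M} (h : a * b = 1) : a = 1 ∧ b = 1 := by
  obtain ⟨ν, h1, h2⟩ := hA
  have hν1 : ν (1 : M) = 0 := by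
    have h3 := h2 1 1
    rw [one_mul] at h3
    omega
  have h4 := h2 a b
  rw [h, hν1] at h4
  constructor
  · by_contra ha
    have := h1 a ha
    omega
  · by_contra hb
    have := h1 b hb
    omega

/-! ### Divisibility basics -/

theorem ldvd_refl' (a : M) : LDvd a a := ⟨1, (mul_one a).symm⟩

theorem ldvd_one' (a : M) : LDvd 1 a := ⟨a, (one_mul a).symm⟩

theorem ldvd_mul' (a b : M) : LDvd a (a * b) := ⟨b, rfl⟩

theorem ldvd_trans' {a b c : M} : LDvd a b → LDvd b c → LDvd a c
  | ⟨u, hu⟩, ⟨v, hv⟩ => ⟨u * v, by rw [hv, hu, mul_assoc]⟩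

theorem rdvd_refl' (a : M) : RDvd a a := ⟨1, (one_mul a).symm⟩

theorem rdvd_one' (a : M) : RDvd 1 a := ⟨a, (mul_one a).symm⟩

theorem rdvd_mul' (a b : M) : RDvd b (a * b) := ⟨a, rfl⟩

theorem rdvd_trans' {a b c : M} : RDvd a b → RDvd b c → RDvd a c
  | ⟨u, hu⟩, ⟨v, hv⟩ => ⟨v * u, by rw [hv, hu, mul_assoc]⟩

theorem ldvd_antisymm' (hc : IsCancellative M) (hA : IsAtomicMon M) {a b : M}
    (h1 : LDvd a b) (h2 : LDvd b a) : a = b := by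
  obtain ⟨u, hu⟩ := h1
  obtain ⟨v, hv⟩ := h2
  have h3 : a * 1 = a * (u * v) := by
    conv_lhs => rw [mul_one, hv, hu]
    rw [mul_assoc]
  have huv : u * v = 1 := (cancel_left' hc h3).symm
  have h4 := mul_eq_one' hA huv
  rw [hu, h4.1, mul_one]

theorem gcdL_unique (hc : IsCancellative M) (hA : IsAtomicMon M) {a b d d' : M}
    (h1 : IsGcdL a b d) (h2 : IsGcdL a b d') : d = d' :=
  ldvd_antisymm' hc hA (h2.2.2 d h1.1 h1.2.1) (h1.2.2 d' h2.1 h2.2.1)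

theorem gcdL_self_mul (h b : M) : IsGcdL h (h * b) h :=
  ⟨ldvd_refl' h, ldvd_mul' h b, fun _ hch _ => hch⟩

/-! ### Garside element: common multiples -/

theorem factor_ldvd_rdvd {Δ : M} (hb : IsBalanced Δ) {f : M} (hf : Factor f Δ) :
    LDvd f Δ ∧ RDvd f Δ := by
  have hiff : ∀ x : M, LDvd x Δ ↔ RDvd x Δ := fun x => Set.ext_iff.mp hb x
  obtain ⟨c, d, h⟩ := hf
  constructor
  · have h1 : RDvd (f * d) Δ := ⟨c, by rw [h, mul_assoc]⟩
    obtain ⟨e, he⟩ := (hiff (f * d)).mpr h1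
    exact ⟨d * e, by rw [he, mul_assoc]⟩
  · have h1 : LDvd (c * f) Δ := ⟨d, h⟩
    obtain ⟨e, he⟩ := (hiff (c * f)).mp h1
    exact ⟨e * c, by rw [he, mul_assoc]⟩

theorem comm_delta {Δ : M} (hΔ : IsGarsideElt Δ) (a : M) : ∃ a', a * Δ = Δ * a' := by
  have hiff : ∀ x : M, LDvd x Δ ↔ RDvd x Δ := fun x => Set.ext_iff.mp hΔ.1 x
  have ha : a ∈ Submonoid.closure (Factors Δ) := hΔ.2 ▸ Submonoid.mem_top a
  induction ha using Submonoid.closure_induction with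
  | mem f hf =>
    obtain ⟨⟨c, hcf⟩, _⟩ := factor_ldvd_rdvd hΔ.1 hf
    have h1 : RDvd c Δ := ⟨f, hcf⟩
    obtain ⟨c', hc'⟩ := (hiff c).mpr h1
    refine ⟨c', ?_⟩
    conv_lhs => rw [hc']
    rw [← mul_assoc, ← hcf]
  | one => exact ⟨1, by rw [one_mul, mul_one]⟩
  | mul x y hx hy ihx ihy =>
    obtain ⟨x', hx'⟩ := ihx
    obtain ⟨y', hy'⟩ := ihy
    exact ⟨x' * y', by rw [mul_assoc, hy', ← mul_assoc, hx', mul_assoc]⟩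

theorem comm_delta' {Δ : M} (hΔ : IsGarsideElt Δ) (a : M) : ∃ a', Δ * a = a' * Δ := by
  have hiff : ∀ x : M, LDvd x Δ ↔ RDvd x Δ := fun x => Set.ext_iff.mp hΔ.1 x
  have ha : a ∈ Submonoid.closure (Factors Δ) := hΔ.2 ▸ Submonoid.mem_top a
  induction ha using Submonoid.closure_induction with
  | mem f hf =>
    obtain ⟨_, ⟨c, hcf⟩⟩ := factor_ldvd_rdvd hΔ.1 hf
    have h1 : LDvd c Δ := ⟨f, hcf⟩
    obtain ⟨c', hc'⟩ := (hiff c).mp h1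
    refine ⟨c', ?_⟩
    conv_lhs => rw [hc']
    rw [mul_assoc, ← hcf]
  | one => exact ⟨1, by rw [one_mul, mul_one]⟩
  | mul x y hx hy ihx ihy =>
    obtain ⟨x', hx'⟩ := ihx
    obtain ⟨y', hy'⟩ := ihy
    exact ⟨x' * y', by rw [← mul_assoc, hx', mul_assoc, hy', ← mul_assoc]⟩

theorem comm_delta_pow {Δ : M} (hΔ : IsGarsideElt Δ) (a : M) (k : ℕ) :
    ∃ a', a * Δ ^ k = Δ ^ k * a' := by
  induction k with
  | zero => exact ⟨a, by simp⟩
  | succ n ih =>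
    obtain ⟨b, hb⟩ := ih
    obtain ⟨c, hc⟩ := comm_delta hΔ b
    exact ⟨c, by rw [pow_succ, ← mul_assoc, hb, mul_assoc, hc, mul_assoc]⟩

theorem comm_delta_pow' {Δ : M} (hΔ : IsGarsideElt Δ) (k : ℕ) :
    ∀ a : M, ∃ a', Δ ^ k * a = a' * Δ ^ k := by
  induction k with
  | zero => exact fun a => ⟨a, by simp⟩
  | succ n ih =>
    intro a
    obtain ⟨b, hb⟩ := comm_delta' hΔ a
    obtain ⟨c, hc⟩ := ih b
    exact ⟨c, by rw [pow_succ, mul_assoc, hb, ← mul_assoc, hc, mul_assoc]⟩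

theorem ldvd_delta_pow {Δ : M} (hΔ : IsGarsideElt Δ) (a : M) : ∃ k, LDvd a (Δ ^ k) := by
  have ha : a ∈ Submonoid.closure (Factors Δ) := hΔ.2 ▸ Submonoid.mem_top a
  induction ha using Submonoid.closure_induction with
  | mem f hf =>
    obtain ⟨⟨c, hcf⟩, _⟩ := factor_ldvd_rdvd hΔ.1 hf
    exact ⟨1, c, by rw [pow_one, hcf]⟩
  | one => exact ⟨0, ldvd_one' _⟩
  | mul x y hx hy ihx ihy =>
    obtain ⟨j, c, hc⟩ := ihx
    obtain ⟨k, d, hd⟩ := ihy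
    obtain ⟨c', hc'⟩ := comm_delta_pow hΔ c k
    refine ⟨j + k, d * c', ?_⟩
    rw [pow_add, hc, mul_assoc, hc', hd]
    rw [mul_assoc, mul_assoc]

theorem rdvd_delta_pow {Δ : M} (hΔ : IsGarsideElt Δ) (a : M) : ∃ k, RDvd a (Δ ^ k) := by
  have ha : a ∈ Submonoid.closure (Factors Δ) := hΔ.2 ▸ Submonoid.mem_top a
  induction ha using Submonoid.closure_induction with
  | mem f hf =>
    obtain ⟨_, ⟨c, hcf⟩⟩ := factor_ldvd_rdvd hΔ.1 hf
    exact ⟨1, c, by rw [pow_one, hcf]⟩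
  | one => exact ⟨0, rdvd_one' _⟩
  | mul x y hx hy ihx ihy =>
    obtain ⟨j, c, hc⟩ := ihx
    obtain ⟨k, d, hd⟩ := ihy
    obtain ⟨d', hd'⟩ := comm_delta_pow' hΔ j d
    refine ⟨j + k, d' * c, ?_⟩
    rw [pow_add, hd, ← mul_assoc, hd', hc]
    rw [mul_assoc, mul_assoc, mul_assoc]

theorem common_rmul {Δ : M} (hΔ : IsGarsideElt Δ) (a b : M) :
    ∃ c, LDvd a c ∧ LDvd b c := by
  obtain ⟨j, hj⟩ := ldvd_delta_pow hΔ a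
  obtain ⟨k, hk⟩ := ldvd_delta_pow hΔ b
  refine ⟨Δ ^ (j + k), ldvd_trans' hj ⟨Δ ^ k, (pow_add Δ j k)⟩, ?_⟩
  exact ldvd_trans' hk ⟨Δ ^ j, by rw [add_comm, pow_add]⟩

theorem common_lmul {Δ : M} (hΔ : IsGarsideElt Δ) (a b : M) :
    ∃ c, RDvd a c ∧ RDvd b c := by
  obtain ⟨j, hj⟩ := rdvd_delta_pow hΔ a
  obtain ⟨k, hk⟩ := rdvd_delta_pow hΔ b
  refine ⟨Δ ^ (j + k), rdvd_trans' hj ⟨Δ ^ k, by rw [add_comm, pow_add]⟩, ?_⟩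
  exact rdvd_trans' hk ⟨Δ ^ j, (pow_add Δ j k)⟩

/-! ### Existence of gcds -/

theorem gcdR_total (hc : IsCancellative M) (hA : IsAtomicMon M)
    (hlcmR : ∀ a b : M, (∃ c, RDvd a c ∧ RDvd b c) → ∃ m, IsLcmR a b m)
    (a b : M) : ∃ d, IsGcdR a b d := by
  obtain ⟨ν, hν1, hν2⟩ := hA
  have hν0 : ν (1 : M) = 0 := by
    have h3 := hν2 1 1
    rw [one_mul] at h3
    omega
  set S : Set ℕ := {n | ∃ c, RDvd c a ∧ RDvd c b ∧ ν c = n} with hSdef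
  have hne : S.Nonempty := ⟨0, 1, rdvd_one' a, rdvd_one' b, hν0⟩
  have hbdd : BddAbove S := by
    refine ⟨ν a, fun n hn => ?_⟩
    obtain ⟨c, ⟨x, hx⟩, _, hνc⟩ := hn
    have h4 := hν2 x c
    rw [← hx] at h4
    omega
  obtain ⟨d, hda, hdb, hνd⟩ := Nat.sSup_mem hne hbdd
  refine ⟨d, hda, hdb, ?_⟩
  intro c' hc'a hc'b
  obtain ⟨m, hm⟩ := hlcmR d c' ⟨a, hda, hc'a⟩
  have hma : RDvd m a := hm.2.2 a hda hc'a
  have hmb : RDvd m b := hm.2.2 b hdb hc'b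
  have hle : ν m ≤ sSup S := le_csSup hbdd ⟨m, hma, hmb, rfl⟩
  obtain ⟨x, hx⟩ := hm.1
  have hge := hν2 x d
  rw [← hx] at hge
  have hx1 : x = 1 := by
    by_contra hne1
    have := hν1 x hne1
    omega
  rw [hx1, one_mul] at hx
  rw [← hx]
  exact hm.2.1

theorem gcdL_total (hc : IsCancellative M) (hA : IsAtomicMon M)
    (hlcmL : ∀ a b : M, (∃ c, LDvd a c ∧ LDvd b c) → ∃ m, IsLcmL a b m)
    (a b : M) : ∃ d, IsGcdL a b d := by
  obtain ⟨ν, hν1, hν2⟩ := hA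
  have hν0 : ν (1 : M) = 0 := by
    have h3 := hν2 1 1
    rw [one_mul] at h3
    omega
  set S : Set ℕ := {n | ∃ c, LDvd c a ∧ LDvd c b ∧ ν c = n} with hSdef
  have hne : S.Nonempty := ⟨0, 1, ldvd_one' a, ldvd_one' b, hν0⟩
  have hbdd : BddAbove S := by
    refine ⟨ν a, fun n hn => ?_⟩
    obtain ⟨c, ⟨x, hx⟩, _, hνc⟩ := hn
    have h4 := hν2 c x
    rw [← hx] at h4
    omega
  obtain ⟨d, hda, hdb, hνd⟩ := Nat.sSup_mem hne hbdd
  refine ⟨d, hda, hdb, ?_⟩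
  intro c' hc'a hc'b
  obtain ⟨m, hm⟩ := hlcmL d c' ⟨a, hda, hc'a⟩
  have hma : LDvd m a := hm.2.2 a hda hc'a
  have hmb : LDvd m b := hm.2.2 b hdb hc'b
  have hle : ν m ≤ sSup S := le_csSup hbdd ⟨m, hma, hmb, rfl⟩
  obtain ⟨x, hx⟩ := hm.1
  have hge := hν2 d x
  rw [← hx] at hge
  have hx1 : x = 1 := by
    by_contra hne1
    have := hν1 x hne1
    omega
  rw [hx1, mul_one] at hx
  rw [← hx]
  exact hm.2.1

/-! ### gcd distributivity -/

theorem gcdL_mul_left (hc : IsCancellative M) (hlcm : ∀ a b : M, ∃ m, IsLcmL a b m)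
    {u v w : M} (h : IsGcdL u v w) (x : M) : IsGcdL (x * u) (x * v) (x * w) := by
  obtain ⟨⟨p, hp⟩, ⟨q, hq⟩, hmin⟩ := h
  refine ⟨⟨p, by rw [hp, ← mul_assoc]⟩, ⟨q, by rw [hq, ← mul_assoc]⟩, ?_⟩
  intro e he1 he2
  obtain ⟨m, hm⟩ := hlcm e x
  have hmxu : LDvd m (x * u) := hm.2.2 _ he1 (ldvd_mul' x u)
  have hmxv : LDvd m (x * v) := hm.2.2 _ he2 (ldvd_mul' x v)
  obtain ⟨t, ht⟩ := hm.2.1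
  obtain ⟨s, hs⟩ := hmxu
  have h1 : x * u = x * (t * s) := by rw [hs, ht, mul_assoc]
  have htu : LDvd t u := ⟨s, cancel_left' hc h1⟩
  obtain ⟨s', hs'⟩ := hmxv
  have h2 : x * v = x * (t * s') := by rw [hs', ht, mul_assoc]
  have htv : LDvd t v := ⟨s', cancel_left' hc h2⟩
  obtain ⟨r, hr⟩ := hmin t htu htv
  refine ldvd_trans' hm.1 ⟨r, ?_⟩
  rw [hr, ht, ← mul_assoc]

/-! ### The group of fractions model (Ore construction via permutations) -/

def OreRel (p q : M × M) : Prop := ∃ u v, p.1 * u = q.1 * v ∧ p.2 * u = q.2 * v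

theorem oreRel_refl (p : M × M) : OreRel p p := ⟨1, 1, rfl, rfl⟩

theorem oreRel_symm {p q : M × M} (h : OreRel p q) : OreRel q p := by
  obtain ⟨u, v, h1, h2⟩ := h
  exact ⟨v, u, h1.symm, h2.symm⟩

theorem oreRel_trans {Δ : M} (hΔ : IsGarsideElt Δ) {p q r : M × M}
    (h1 : OreRel p q) (h2 : OreRel q r) : OreRel p r := by
  obtain ⟨u, v, h11, h12⟩ := h1
  obtain ⟨u', v', h21, h22⟩ := h2
  obtain ⟨z, ⟨s, hs⟩, ⟨t, ht⟩⟩ := common_rmul hΔ v u'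
  refine ⟨u * s, v' * t, ?_, ?_⟩
  · rw [← mul_assoc, h11, mul_assoc, ← hs, ht, ← mul_assoc, h21, mul_assoc]
  · rw [← mul_assoc, h12, mul_assoc, ← hs, ht, ← mul_assoc, h22, mul_assoc]

def oreSetoid {Δ : M} (hΔ : IsGarsideElt Δ) : Setoid (M × M) :=
  ⟨OreRel, ⟨oreRel_refl, oreRel_symm, oreRel_trans hΔ⟩⟩

def oreAct {Δ : M} (hΔ : IsGarsideElt Δ) (m : M) :
    Quotient (oreSetoid hΔ) → Quotient (oreSetoid hΔ) :=
  Quotient.map (fun p => (m * p.1, p.2)) (by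
    rintro p q ⟨u, v, h1, h2⟩
    exact ⟨u, v, by show m * p.1 * u = m * q.1 * v; rw [mul_assoc, h1, mul_assoc], h2⟩)

theorem oreAct_mk {Δ : M} (hΔ : IsGarsideElt Δ) (m : M) (p : M × M) :
    oreAct hΔ m (Quotient.mk (oreSetoid hΔ) p) = Quotient.mk (oreSetoid hΔ) (m * p.1, p.2) :=
  rfl

theorem oreAct_bij (hc : IsCancellative M) {Δ : M} (hΔ : IsGarsideElt Δ) (m : M) :
    Function.Bijective (oreAct hΔ m) := by
  constructor
  · intro x y
    refine Quotient.inductionOn₂ x y ?_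
    intro p q h
    rw [oreAct_mk, oreAct_mk] at h
    obtain ⟨u, v, h1, h2⟩ := Quotient.exact h
    refine Quotient.sound ⟨u, v, ?_, h2⟩
    have h1' : m * (p.1 * u) = m * (q.1 * v) := by
      rw [← mul_assoc, ← mul_assoc]
      exact h1
    exact cancel_left' hc h1'
  · intro y
    refine Quotient.inductionOn y ?_
    intro p
    obtain ⟨z, ⟨s, hs⟩, ⟨t, ht⟩⟩ := common_rmul hΔ p.1 m
    refine ⟨Quotient.mk _ (t, p.2 * s), ?_⟩
    rw [oreAct_mk]
    refine Quotient.sound ⟨1, s, ?_, ?_⟩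
    · show m * t * 1 = p.1 * s
      rw [mul_one, ← ht, hs]
    · show p.2 * s * 1 = p.2 * s
      rw [mul_one]

noncomputable def oreHom (hc : IsCancellative M) {Δ : M} (hΔ : IsGarsideElt Δ) :
    M →* Equiv.Perm (Quotient (oreSetoid hΔ)) where
  toFun m := Equiv.ofBijective (oreAct hΔ m) (oreAct_bij hc hΔ m)
  map_one' := by
    refine Equiv.ext fun x => ?_
    refine Quotient.inductionOn x fun p => ?_
    show oreAct hΔ 1 (Quotient.mk _ p) = Quotient.mk _ p
    rw [oreAct_mk, one_mul]
  map_mul' a b := by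
    refine Equiv.ext fun x => ?_
    refine Quotient.inductionOn x fun p => ?_
    show oreAct hΔ (a * b) (Quotient.mk _ p) =
      oreAct hΔ a (oreAct hΔ b (Quotient.mk _ p))
    rw [oreAct_mk, oreAct_mk, oreAct_mk, mul_assoc]

theorem oreHom_apply (hc : IsCancellative M) {Δ : M} (hΔ : IsGarsideElt Δ) (m : M)
    (x : Quotient (oreSetoid hΔ)) : oreHom hc hΔ m x = oreAct hΔ m x := rfl

end Aux

section Env

variable {M : Type} [Monoid M] {G : Type} [Group G]

theorem exists_frac {Δ : M} (hΔ : IsGarsideElt Δ) (κ : M →* G)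
    (hκ : IsEnvelopingGroup M G κ) (g : G) : ∃ a b : M, g = κ a * (κ b)⁻¹ := by
  let H : Subgroup G :=
    { carrier := {g | ∃ a b : M, g = κ a * (κ b)⁻¹}
      one_mem' := ⟨1, 1, by simp⟩
      mul_mem' := by
        rintro g₁ g₂ ⟨a, b, rfl⟩ ⟨c, d, rfl⟩
        obtain ⟨z, ⟨p, hp⟩, ⟨q, hq⟩⟩ := common_rmul hΔ b c
        refine ⟨a * p, d * q, ?_⟩
        have h1 : κ b * κ p = κ c * κ q := by
          rw [← map_mul, ← map_mul, ← hp, ← hq]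
        have h2 : (κ b)⁻¹ * κ c = κ p * (κ q)⁻¹ := by
          rw [inv_mul_eq_iff_eq_mul, ← mul_assoc, h1, mul_assoc, mul_inv_cancel, mul_one]
        calc κ a * (κ b)⁻¹ * (κ c * (κ d)⁻¹)
            = κ a * ((κ b)⁻¹ * κ c) * (κ d)⁻¹ := by group
          _ = κ a * (κ p * (κ q)⁻¹) * (κ d)⁻¹ := by rw [h2]
          _ = κ (a * p) * (κ (d * q))⁻¹ := by
              rw [map_mul, map_mul, mul_inv_rev]
              group
      inv_mem' := by
        rintro g ⟨a, b, rfl⟩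
        exact ⟨b, a, by rw [mul_inv_rev, inv_inv]⟩ }
  have hmem : ∀ m : M, κ m ∈ H := fun m => ⟨m, 1, by simp⟩
  obtain ⟨φ, hφ, _⟩ := hκ H (κ.codRestrict H hmem)
  obtain ⟨χ, hχ, huniq⟩ := hκ G κ
  have h1 : (H.subtype.comp φ).comp κ = κ := by
    rw [MonoidHom.comp_assoc, hφ]
    rfl
  have h2 : H.subtype.comp φ = MonoidHom.id G :=
    (huniq _ h1).trans (huniq (MonoidHom.id G) (MonoidHom.id_comp κ)).symm
  have h3 : (φ g : G) = g := by
    have h4 := congrArg (fun ψ : G →* G => ψ g) h2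
    simpa using h4
  have h4 := (φ g).2
  rw [h3] at h4
  exact h4

theorem frac_eq (hc : IsCancellative M) {Δ : M} (hΔ : IsGarsideElt Δ) (κ : M →* G)
    (hκ : IsEnvelopingGroup M G κ) {a b c d : M}
    (h : κ a * (κ b)⁻¹ = κ c * (κ d)⁻¹) : ∃ u v, a * u = c * v ∧ b * u = d * v := by
  obtain ⟨φ, hφ, _⟩ := hκ (Equiv.Perm (Quotient (oreSetoid hΔ))) (oreHom hc hΔ)
  have hx : ∀ x : M, φ (κ x) = oreHom hc hΔ x := fun x => DFunLike.congr_fun hφ x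
  have h2 : oreHom hc hΔ a * (oreHom hc hΔ b)⁻¹ =
      oreHom hc hΔ c * (oreHom hc hΔ d)⁻¹ := by
    have h3 := congrArg φ h
    simp only [map_mul, map_inv] at h3
    rw [hx, hx, hx, hx] at h3
    exact h3
  have key : ∀ x y : M,
      (oreHom hc hΔ x * (oreHom hc hΔ y)⁻¹) (Quotient.mk (oreSetoid hΔ) (1, 1)) =
        Quotient.mk (oreSetoid hΔ) (x, y) := by
    intro x y
    have hy : (oreHom hc hΔ y)⁻¹ (Quotient.mk (oreSetoid hΔ) (1, 1)) =
        Quotient.mk (oreSetoid hΔ) (1, y) := by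
      rw [Equiv.Perm.inv_def, Equiv.symm_apply_eq]
      rw [oreHom_apply, oreAct_mk]
      exact Quotient.sound ⟨y, 1, by simp, by simp⟩
    rw [Equiv.Perm.mul_apply, hy, oreHom_apply, oreAct_mk]
    exact Quotient.sound ⟨1, 1, by simp, by simp⟩
  have h4 : Quotient.mk (oreSetoid hΔ) (a, b) = Quotient.mk (oreSetoid hΔ) (c, d) := by
    rw [← key a b, ← key c d, h2]
  obtain ⟨u, v, h5, h6⟩ := Quotient.exact h4
  exact ⟨u, v, h5, h6⟩

theorem nf_exists (hM : IsPreGarside M) {Δ : M} (hΔ : IsGarsideElt Δ) (κ : M →* G)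
    (hκ : IsEnvelopingGroup M G κ) (g : G) : ∃ a b : M, NormalForm κ g a b := by
  obtain ⟨hc, hA, hlcmL, hlcmR⟩ := hM
  obtain ⟨a, b, hg⟩ := exists_frac hΔ κ hκ g
  obtain ⟨d, ⟨a₁, ha⟩, ⟨b₁, hb⟩, hmin⟩ := gcdR_total hc hA hlcmR a b
  refine ⟨a₁, b₁, ?_, ?_⟩
  · rw [hg, ha, hb, map_mul, map_mul, mul_inv_rev]
    group
  · rintro c ⟨p, hp⟩ ⟨q, hq⟩
    have h1 : RDvd (c * d) a := ⟨p, by rw [ha, hp, mul_assoc]⟩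
    have h2 : RDvd (c * d) b := ⟨q, by rw [hb, hq, mul_assoc]⟩
    obtain ⟨y, hy⟩ := hmin (c * d) h1 h2
    have h3 : 1 * d = (y * c) * d := by
      rw [one_mul]
      conv_lhs => rw [hy]
      rw [mul_assoc]
    exact (mul_eq_one' hA (cancel_right' hc h3).symm).2

theorem nf_unique (hM : IsPreGarside M) {Δ : M} (hΔ : IsGarsideElt Δ) (κ : M →* G)
    (hκ : IsEnvelopingGroup M G κ) {g : G} {a b c d : M}
    (h1 : NormalForm κ g a b) (h2 : NormalForm κ g c d) : a = c ∧ b = d := by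
  obtain ⟨hc, hA, hlcmL, hlcmR⟩ := hM
  obtain ⟨u, v, hau, hbu⟩ := frac_eq hc hΔ κ hκ (h1.1.symm.trans h2.1)
  obtain ⟨m, hm⟩ := hlcmR u v ⟨a * u, ⟨a, rfl⟩, ⟨c, hau⟩⟩
  obtain ⟨p, hp⟩ := hm.1
  obtain ⟨q, hq⟩ := hm.2.1
  obtain ⟨s, hs⟩ := hm.2.2 (a * u) ⟨a, rfl⟩ ⟨c, hau⟩
  obtain ⟨t, ht⟩ := hm.2.2 (b * u) ⟨b, rfl⟩ ⟨d, hbu⟩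
  have ha : a = s * p := cancel_right' hc (by rw [hs, hp, ← mul_assoc])
  have hcq : c = s * q := cancel_right' hc (by rw [← hau, hs, hq, ← mul_assoc])
  have hb : b = t * p := cancel_right' hc (by rw [ht, hp, ← mul_assoc])
  have hd : d = t * q := cancel_right' hc (by rw [← hbu, ht, hq, ← mul_assoc])
  have hp1 : p = 1 := h1.2 p ⟨s, ha⟩ ⟨t, hb⟩
  have hq1 : q = 1 := h2.2 q ⟨s, hcq⟩ ⟨t, hd⟩
  rw [hp1, mul_one] at ha hb
  rw [hq1, mul_one] at hcq hd
  exact ⟨ha.trans hcq.symm, hb.trans hd.symm⟩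

end Env


/-- **Theorem 4.4 (1)-(2).** For a Garside monoid `M` with Garside element `Δ` and a
parabolic submonoid `N`, the relation `≤_N` is a partial order on the enveloping group
`G(M)`, and `g₁ ≤_N g₂` implies `g₁ G(N) = g₂ G(N)`. -/
theorem theorem_4_4_order {M : Type} [Monoid M] (hM : IsPreGarside M) (Δ : M)
    (hΔ : IsGarsideElt Δ) (N : Submonoid M) (hN : IsParabolic N)
    {G : Type} [Group G] (κ : M →* G) (hκ : IsEnvelopingGroup M G κ) :
    Reflexive (leN κ N) ∧ AntiSymmetric (leN κ N) ∧ Transitive (leN κ N) ∧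
    ∀ g₁ g₂ : G, leN κ N g₁ g₂ →
      g₂⁻¹ * g₁ ∈ Subgroup.closure (κ '' (N : Set M)) := by
  have hc : IsCancellative M := hM.1
  have hA : IsAtomicMon M := hM.2.1
  have hlcmL := hM.2.2.1
  have hlcmR := hM.2.2.2
  have hlcm_total : ∀ u v : M, ∃ w, IsLcmL u v w :=
    fun u v => hlcmL u v (common_rmul hΔ u v)
  refine ⟨?_, ?_, ?_, ?_⟩
  -- Reflexivity
  · intro g
    obtain ⟨a, b, hnf⟩ := nf_exists hM hΔ κ hκ g
    exact ⟨a, b, a, b, hnf, hnf, 1, N.one_mem, 1, N.one_mem, 1, (mul_one a).symm,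
      by rw [mul_one], 1, ⟨ldvd_refl' 1, ldvd_refl' 1, fun c hcd _ => hcd⟩,
      ⟨ldvd_refl' 1, ldvd_one' _, fun c hcd _ => hcd⟩⟩
  -- Antisymmetry
  · intro g₁ g₂ h12 h21
    obtain ⟨a₁, b₁, a₂, b₂, nf1, nf2, h₁, hh₁, h₂, hh₂, a, e₁, e₂, dd, hd1, hd2⟩ := h12
    obtain ⟨a₂', b₂', a₁', b₁', nf2', nf1', h₁', hh₁', h₂', hh₂', a', e₁', e₂', dd', hd1', hd2'⟩ := h21
    obtain ⟨ea, eb⟩ := nf_unique hM hΔ κ hκ nf1 nf1'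
    obtain ⟨ea2, eb2⟩ := nf_unique hM hΔ κ hκ nf2 nf2'
    subst ea eb ea2 eb2
    have h3 : a₁ * 1 = a₁ * (a * a') := by
      rw [mul_one]
      conv_lhs => rw [e₁', e₁]
      rw [mul_assoc]
    obtain ⟨ha1, ha'1⟩ := mul_eq_one' hA (cancel_left' hc h3).symm
    subst ha1 ha'1
    rw [mul_one] at e₁ e₁' e₂ e₂'
    have hgc : IsGcdL h₂ (h₁ * b₁) h₂ := by
      rw [← e₂]
      exact gcdL_self_mul h₂ b₂
    have hdd : dd = h₂ := gcdL_unique hc hA hd2 hgc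
    rw [hdd] at hd1
    obtain ⟨k, hk⟩ := hd1.2.1
    have hb2 : b₂ = k * b₁ := by
      refine cancel_left' hc (a := h₂) ?_
      rw [e₂]
      conv_lhs => rw [hk]
      rw [mul_assoc]
    have hgc' : IsGcdL h₂' (h₁' * b₂) h₂' := by
      rw [← e₂']
      exact gcdL_self_mul h₂' b₁
    have hdd' : dd' = h₂' := gcdL_unique hc hA hd2' hgc'
    rw [hdd'] at hd1'
    obtain ⟨k', hk'⟩ := hd1'.2.1
    have hb1 : b₁ = k' * b₂ := by
      refine cancel_left' hc (a := h₂') ?_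
      rw [e₂']
      conv_lhs => rw [hk']
      rw [mul_assoc]
    have h5 : (1 : M) * b₂ = (k * k') * b₂ := by
      rw [one_mul]
      conv_lhs => rw [hb2, hb1]
      rw [mul_assoc]
    obtain ⟨hk1, _⟩ := mul_eq_one' hA (cancel_right' hc h5).symm
    rw [hk1, one_mul] at hb2
    rw [nf1.1, nf2.1, e₁, hb2]
  -- Transitivity
  · intro g₁ g₂ g₃ h12 h23
    obtain ⟨a₁, b₁, a₂, b₂, nf1, nf2, h₁, hh₁, h₂, hh₂, a, e₁, e₂, dd, hd1, hd2⟩ := h12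
    obtain ⟨a₂', b₂', a₃, b₃, nf2', nf3, h₁', hh₁', h₂', hh₂', a', e₁', e₂', dd', hd1', hd2'⟩ := h23
    obtain ⟨ea, eb⟩ := nf_unique hM hΔ κ hκ nf2 nf2'
    subst ea eb
    obtain ⟨m, hm⟩ := hlcmR h₁' h₂ (common_lmul hΔ h₁' h₂)
    have hmN : m ∈ N := hN.2.2 h₁' h₂ m hh₁' hh₂ hm
    obtain ⟨x, hx⟩ := hm.1
    obtain ⟨y, hy⟩ := hm.2.1
    have hxN : x ∈ N := (hN.1 x h₁' (by rw [← hx]; exact hmN)).1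
    have hyN : y ∈ N := (hN.1 y h₂ (by rw [← hy]; exact hmN)).1
    refine ⟨a₁, b₁, a₃, b₃, nf1, nf3, y * h₁, mul_mem hyN hh₁, x * h₂',
      mul_mem hxN hh₂', a * a', ?_, ?_, ?_⟩
    · rw [e₁', e₁, mul_assoc]
    · calc x * h₂' * b₃ = x * (h₂' * b₃) := by rw [mul_assoc]
        _ = x * (h₁' * b₂ * a') := by rw [e₂']
        _ = x * h₁' * b₂ * a' := by simp only [mul_assoc]
        _ = y * h₂ * b₂ * a' := by rw [← hx, hy]
        _ = y * (h₂ * b₂) * a' := by rw [mul_assoc y]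
        _ = y * (h₁ * b₁ * a) * a' := by rw [e₂]
        _ = y * h₁ * b₁ * (a * a') := by simp only [mul_assoc]
    · obtain ⟨cg, hcg⟩ := gcdL_total hc hA hlcmL (x * h₂') (y * h₁ * b₁)
      have hEq : y * h₁ * b₁ * a = x * (h₁' * b₂) := by
        calc y * h₁ * b₁ * a = y * (h₁ * b₁ * a) := by simp only [mul_assoc]
          _ = y * (h₂ * b₂) := by rw [← e₂]
          _ = y * h₂ * b₂ := by rw [mul_assoc]
          _ = m * b₂ := by rw [← hy]
          _ = x * h₁' * b₂ := by rw [hx]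
          _ = x * (h₁' * b₂) := by rw [mul_assoc]
      have hc3 : LDvd cg (x * (h₁' * b₂)) := by
        rw [← hEq]
        exact ldvd_trans' hcg.2.1 (ldvd_mul' _ a)
      have hdist1 : IsGcdL (x * h₂') (x * (h₁' * b₂)) (x * dd') :=
        gcdL_mul_left hc hlcm_total hd2' x
      have hc4 : LDvd cg (x * dd') := hdist1.2.2 cg hcg.1 hc3
      obtain ⟨r, hr⟩ := hd1'.2.1
      have hc5 : LDvd cg (y * h₂) := by
        refine ldvd_trans' hc4 ⟨r, ?_⟩
        rw [← hy, hx, hr]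
        simp only [mul_assoc]
      have hdist2 : IsGcdL (y * h₂) (y * (h₁ * b₁)) (y * dd) :=
        gcdL_mul_left hc hlcm_total hd2 y
      have hc6 : LDvd cg (y * (h₁ * b₁)) := by
        have h7 := hcg.2.1
        rwa [mul_assoc] at h7
      have hc7 : LDvd cg (y * dd) := hdist2.2.2 cg hc5 hc6
      obtain ⟨r₂, hr₂⟩ := hd1.2.1
      have hc8 : LDvd cg (y * h₁) := by
        refine ldvd_trans' hc7 ⟨r₂, ?_⟩
        rw [hr₂]
        simp only [mul_assoc]
      exact ⟨cg, ⟨hcg.1, hc8, fun e he1 he2 =>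
        hcg.2.2 e he1 (ldvd_trans' he2 (ldvd_mul' _ b₁))⟩, hcg⟩
  -- Cosets
  · intro g₁ g₂ h12
    obtain ⟨a₁, b₁, a₂, b₂, nf1, nf2, h₁, hh₁, h₂, hh₂, a, e₁, e₂, _⟩ := h12
    have hb : κ h₂ * κ b₂ = κ h₁ * κ b₁ * κ a := by
      rw [← map_mul, ← map_mul, ← map_mul, e₂]
    have hA2 : κ a₂ = κ a₁ * κ a := by rw [← map_mul, e₁]
    have hb2 : κ b₂ = (κ h₂)⁻¹ * (κ h₁ * κ b₁ * κ a) :=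
      eq_inv_mul_iff_mul_eq.mpr hb
    have key : g₂⁻¹ * g₁ = (κ h₂)⁻¹ * κ h₁ := by
      rw [nf1.1, nf2.1, hA2, hb2]
      group
    rw [key]
    exact mul_mem (inv_mem (Subgroup.subset_closure ⟨h₂, hh₂, rfl⟩))
      (Subgroup.subset_closure ⟨h₁, hh₁, rfl⟩)

end PG
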